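/- For all natural numbers m and n, L_m·L_n = (a/b)^{2 − ε(m+1)·ε(n+1)}·(ab + 4)·F_{m+n}, where ε(k) = 1 if k is odd, 0 if k is even. -/

import Mathlib

set_option maxHeartbeats 1000000

theorem stmt_14 (a b : ℝ) (ha : a ≠ 0) (hb : b ≠ 0)
  (F : ℕ → Matrix (Fin 2) (Fin 2) ℝ) (hF0 : F 0 = 1) (hF1 : F 1 = !![b, b/a; 1, 0])
  (hF : ∀ n : ℕ, F (n + 2) = if Even (n + 2) then a • F (n + 1) + F n else b • F (n + 1) + F n)
  (L : ℕ → Matrix (Fin 2) (Fin 2) ℝ) (hL0 : L 0 = !![a, 2; 2*a/b, -a])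
  (hL1 : L 1 = !![a^2 + 2*a/b, a; a^2/b, 2*a/b])
  (hL : ∀ n : ℕ, L (n + 2) = if Odd (n + 2) then a • L (n + 1) + L n else b • L (n + 1) + L n) :
    ∀ m n : ℕ, L m * L n = ((a/b) ^ (2 - (if Odd (m+1) then 1 else 0) * (if Odd (n+1) then 1 else 0)) * (a * b + 4)) • F (m + n) := by
  let P : ℕ → ℕ → Prop := fun m n => L m * L n =
    ((a/b) ^ (2 - (if Odd (m+1) then 1 else 0) * (if Odd (n+1) then 1 else 0)) * (a * b + 4)) • F (m + n)
  have hF2 : F 2 = a • F 1 + F 0 := by have h := hF 0; norm_num at h; exact h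
  have b00 : P 0 0 := by
    show L 0 * L 0 = _
    rw [hL0, hF0, Matrix.one_fin_two]
    norm_num [Nat.odd_iff]
    refine ⟨⟨?_, ?_⟩, ?_, ?_⟩ <;> field_simp <;> ring
  have b01 : P 0 1 := by
    show L 0 * L 1 = _
    rw [hL0, hL1, hF1]
    norm_num [Nat.odd_iff]
    refine ⟨⟨?_, ?_⟩, ?_, ?_⟩ <;> field_simp <;> ring
  have b10 : P 1 0 := by
    show L 1 * L 0 = _
    rw [hL0, hL1, hF1]
    norm_num [Nat.odd_iff]
    refine ⟨⟨?_, ?_⟩, ?_, ?_⟩ <;> field_simp <;> ring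
  have b11 : P 1 1 := by
    show L 1 * L 1 = _
    rw [hL1, hF2, hF1, hF0, Matrix.one_fin_two]
    norm_num [Nat.odd_iff]
    refine ⟨⟨?_, ?_⟩, ?_, ?_⟩ <;> field_simp <;> ring
  have stepn : ∀ m n, P m n → P m (n+1) → P m (n+2) := by
    intro m n h1 h2
    show L m * L (n+2) = _
    have h1' : L m * L n = _ := h1
    have h2' : L m * L (n+1) = _ := h2
    have hmn : m + (n + 2) = (m + n) + 2 := by omega
    have hmn1 : m + (n + 1) = (m + n) + 1 := by omega
    rw [hmn1] at h2'
    rw [hL n, hmn, hF (m + n)]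
    rcases Nat.mod_two_eq_zero_or_one m with hm | hm <;>
      rcases Nat.mod_two_eq_zero_or_one n with hn | hn
    · have cA : ¬ Odd (n+2) := by rw [Nat.odd_iff]; omega
      have cB : Even (m+n+2) := by rw [Nat.even_iff]; omega
      have cC : Odd (m+1) := by rw [Nat.odd_iff]; omega
      have cD : Odd (n+2+1) := by rw [Nat.odd_iff]; omega
      have cE : Odd (n+1) := by rw [Nat.odd_iff]; omega
      have cG : ¬ Odd (n+1+1) := by rw [Nat.odd_iff]; omega
      rw [if_neg cA, if_pos cB, if_pos cC, if_pos cD]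
      rw [if_pos cC, if_pos cE] at h1'
      rw [if_pos cC, if_neg cG] at h2'
      rw [Matrix.mul_add, Matrix.mul_smul, h1', h2']
      match_scalars <;> norm_num <;> field_simp <;> ring
    · have cA : Odd (n+2) := by rw [Nat.odd_iff]; omega
      have cB : ¬ Even (m+n+2) := by rw [Nat.even_iff]; omega
      have cC : Odd (m+1) := by rw [Nat.odd_iff]; omega
      have cD : ¬ Odd (n+2+1) := by rw [Nat.odd_iff]; omega
      have cE : ¬ Odd (n+1) := by rw [Nat.odd_iff]; omega
      have cG : Odd (n+1+1) := by rw [Nat.odd_iff]; omega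
      rw [if_pos cA, if_neg cB, if_pos cC, if_neg cD]
      rw [if_pos cC, if_neg cE] at h1'
      rw [if_pos cC, if_pos cG] at h2'
      rw [Matrix.mul_add, Matrix.mul_smul, h1', h2']
      match_scalars <;> norm_num <;> field_simp <;> ring
    · have cA : ¬ Odd (n+2) := by rw [Nat.odd_iff]; omega
      have cB : ¬ Even (m+n+2) := by rw [Nat.even_iff]; omega
      have cC : ¬ Odd (m+1) := by rw [Nat.odd_iff]; omega
      have cD : Odd (n+2+1) := by rw [Nat.odd_iff]; omega
      have cE : Odd (n+1) := by rw [Nat.odd_iff]; omega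
      have cG : ¬ Odd (n+1+1) := by rw [Nat.odd_iff]; omega
      rw [if_neg cA, if_neg cB, if_neg cC, if_pos cD]
      rw [if_neg cC, if_pos cE] at h1'
      rw [if_neg cC, if_neg cG] at h2'
      rw [Matrix.mul_add, Matrix.mul_smul, h1', h2']
      match_scalars <;> field_simp <;> ring
    · have cA : Odd (n+2) := by rw [Nat.odd_iff]; omega
      have cB : Even (m+n+2) := by rw [Nat.even_iff]; omega
      have cC : ¬ Odd (m+1) := by rw [Nat.odd_iff]; omega
      have cD : ¬ Odd (n+2+1) := by rw [Nat.odd_iff]; omega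
      have cE : ¬ Odd (n+1) := by rw [Nat.odd_iff]; omega
      have cG : Odd (n+1+1) := by rw [Nat.odd_iff]; omega
      rw [if_pos cA, if_pos cB, if_neg cC, if_neg cD]
      rw [if_neg cC, if_neg cE] at h1'
      rw [if_neg cC, if_pos cG] at h2'
      rw [Matrix.mul_add, Matrix.mul_smul, h1', h2']
      match_scalars <;> field_simp <;> ring
  have stepm : ∀ m n, P m n → P (m+1) n → P (m+2) n := by
    intro m n h1 h2
    show L (m+2) * L n = _
    have h1' : L m * L n = _ := h1
    have h2' : L (m+1) * L n = _ := h2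
    have hmn : m + 2 + n = (m + n) + 2 := by omega
    have hmn1 : m + 1 + n = (m + n) + 1 := by omega
    rw [hmn1] at h2'
    rw [hL m, hmn, hF (m + n)]
    rcases Nat.mod_two_eq_zero_or_one m with hm | hm <;>
      rcases Nat.mod_two_eq_zero_or_one n with hn | hn
    · have cA : ¬ Odd (m+2) := by rw [Nat.odd_iff]; omega
      have cB : Even (m+n+2) := by rw [Nat.even_iff]; omega
      have cC : Odd (m+2+1) := by rw [Nat.odd_iff]; omega
      have cD : Odd (n+1) := by rw [Nat.odd_iff]; omega
      have cE : Odd (m+1) := by rw [Nat.odd_iff]; omega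
      have cG : ¬ Odd (m+1+1) := by rw [Nat.odd_iff]; omega
      rw [if_neg cA, if_pos cB, if_pos cC, if_pos cD]
      rw [if_pos cE, if_pos cD] at h1'
      rw [if_neg cG, if_pos cD] at h2'
      rw [Matrix.add_mul, Matrix.smul_mul, h1', h2']
      match_scalars <;> norm_num <;> field_simp <;> ring
    · have cA : ¬ Odd (m+2) := by rw [Nat.odd_iff]; omega
      have cB : ¬ Even (m+n+2) := by rw [Nat.even_iff]; omega
      have cC : Odd (m+2+1) := by rw [Nat.odd_iff]; omega
      have cD : ¬ Odd (n+1) := by rw [Nat.odd_iff]; omega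
      have cE : Odd (m+1) := by rw [Nat.odd_iff]; omega
      have cG : ¬ Odd (m+1+1) := by rw [Nat.odd_iff]; omega
      rw [if_neg cA, if_neg cB, if_pos cC, if_neg cD]
      rw [if_pos cE, if_neg cD] at h1'
      rw [if_neg cG, if_neg cD] at h2'
      rw [Matrix.add_mul, Matrix.smul_mul, h1', h2']
      match_scalars <;> field_simp <;> ring
    · have cA : Odd (m+2) := by rw [Nat.odd_iff]; omega
      have cB : ¬ Even (m+n+2) := by rw [Nat.even_iff]; omega
      have cC : ¬ Odd (m+2+1) := by rw [Nat.odd_iff]; omega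
      have cD : Odd (n+1) := by rw [Nat.odd_iff]; omega
      have cE : ¬ Odd (m+1) := by rw [Nat.odd_iff]; omega
      have cG : Odd (m+1+1) := by rw [Nat.odd_iff]; omega
      rw [if_pos cA, if_neg cB, if_neg cC, if_pos cD]
      rw [if_neg cE, if_pos cD] at h1'
      rw [if_pos cG, if_pos cD] at h2'
      rw [Matrix.add_mul, Matrix.smul_mul, h1', h2']
      match_scalars <;> norm_num <;> field_simp <;> ring
    · have cA : Odd (m+2) := by rw [Nat.odd_iff]; omega
      have cB : Even (m+n+2) := by rw [Nat.even_iff]; omega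
      have cC : ¬ Odd (m+2+1) := by rw [Nat.odd_iff]; omega
      have cD : ¬ Odd (n+1) := by rw [Nat.odd_iff]; omega
      have cE : ¬ Odd (m+1) := by rw [Nat.odd_iff]; omega
      have cG : Odd (m+1+1) := by rw [Nat.odd_iff]; omega
      rw [if_pos cA, if_pos cB, if_neg cC, if_neg cD]
      rw [if_neg cE, if_neg cD] at h1'
      rw [if_pos cG, if_neg cD] at h2'
      rw [Matrix.add_mul, Matrix.smul_mul, h1', h2']
      match_scalars <;> field_simp <;> ring
  have row : ∀ n, P 0 n ∧ P 1 n := by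
    intro n
    induction n using Nat.twoStepInduction with
    | zero => exact ⟨b00, b10⟩
    | one => exact ⟨b01, b11⟩
    | more n ih1 ih2 => exact ⟨stepn 0 n ih1.1 ih2.1, stepn 1 n ih1.2 ih2.2⟩
  intro m
  induction m using Nat.twoStepInduction with
  | zero => exact fun n => (row n).1
  | one => exact fun n => (row n).2
  | more m ih1 ih2 => exact fun n => stepm m n (ih1 n) (ih2 n)
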